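/- For every ν with 0 < ν < 1 there exists a real number s > 0 satisfying the step-size equation t̄_ν = s + (ν/2) s^{ν−1}, where t̄_ν := 2^{−1/(2−ν)} (2−ν) (2−2ν)^{−(1−ν)/(2−ν)}. -/
import Mathlib

/-- The rescaled GGD-MAP threshold
`t̄_ν = 2^{−1/(2−ν)} (2−ν) (2−2ν)^{−(1−ν)/(2−ν)}` (real powers). -/
noncomputable def tbar (ν : ℝ) : ℝ :=
  (2 : ℝ) ^ (-(1 / (2 - ν))) * (2 - ν) * (2 - 2 * ν) ^ (-((1 - ν) / (2 - ν)))

/-- For `0 < ν < 1` the step-size equation `t̄_ν = s + (ν/2) s^{ν−1}` has a positive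
solution `s` (the size of the jump discontinuity of the GGD-MAP estimator). -/
theorem tbar_step_size (ν : ℝ) (h1 : 0 < ν) (h2 : ν < 1) :
    ∃ s : ℝ, 0 < s ∧ tbar ν = s + ν / 2 * s ^ (ν - 1) := by
  have ha : (0:ℝ) < 1 - ν := by linarith
  have he : (0:ℝ) < 2 - ν := by linarith
  have hne : (2:ℝ) - ν ≠ 0 := ne_of_gt he
  refine ⟨(1 - ν) ^ ((1:ℝ) / (2 - ν)), Real.rpow_pos_of_pos ha _, ?_⟩
  have hs1 : ((1 - ν) ^ ((1:ℝ) / (2 - ν))) ^ (ν - 1)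
      = (1 - ν) ^ ((ν - 1) / (2 - ν)) := by
    rw [← Real.rpow_mul ha.le]
    congr 1
    field_simp
  have hs2 : (1 - ν) ^ ((1:ℝ) / (2 - ν))
      = (1 - ν) * (1 - ν) ^ ((ν - 1) / (2 - ν)) := by
    rw [show (1:ℝ) / (2 - ν) = 1 + (ν - 1) / (2 - ν) by field_simp; ring,
      Real.rpow_add ha, Real.rpow_one]
  have htwo : (2:ℝ) ^ (-(1 / (2 - ν))) * (2:ℝ) ^ (-((1 - ν) / (2 - ν))) = 2⁻¹ := by
    rw [← Real.rpow_add (by norm_num : (0:ℝ) < 2),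
      show -(1 / (2 - ν)) + -((1 - ν) / (2 - ν)) = -1 by field_simp; ring,
      Real.rpow_neg_one]
  have hexp : (1 - ν) ^ (-((1 - ν) / (2 - ν))) = (1 - ν) ^ ((ν - 1) / (2 - ν)) := by
    congr 1; ring
  have h22 : (2:ℝ) - 2 * ν = 2 * (1 - ν) := by ring
  rw [hs1, hs2, tbar, h22, Real.mul_rpow (by norm_num) ha.le, hexp]
  linear_combination ((2 - ν) * (1 - ν) ^ ((ν - 1) / (2 - ν))) * htwo
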